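/- For 1 ≤ α ≤ 2, the Mills ratio m(·; α) of the gamma distribution is reciprocally concave on (0,∞): m(·; α) is convex on (0,∞) and x ↦ m(1/x; α) is concave on (0,∞). -/

import Mathlib

open Set MeasureTheory Real


/-- The Mills ratio of the gamma distribution with shape parameter `α`:
`m(x; α) = Γ(α, x)/(x^(α−1) e^(−x))`, where `Γ(α, x) = ∫ₓ^∞ t^(α−1) e^(−t) dt` is the
upper incomplete gamma function. -/
noncomputable def gammaMills (α x : ℝ) : ℝ :=
  (∫ t in Set.Ioi x, t ^ (α - 1) * Real.exp (-t)) / (x ^ (α - 1) * Real.exp (-x))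


/-- Convexity of `x ↦ log (x + s) - log x` on `(0, ∞)` for `s ≥ 0`. -/
lemma logRatio_convexOn (s : ℝ) (hs : 0 ≤ s) :
    ConvexOn ℝ (Set.Ioi 0) (fun x : ℝ => Real.log (x + s) - Real.log x) := by
  apply convexOn_of_hasDerivWithinAt2_nonneg (f' := fun x => (x + s)⁻¹ - x⁻¹)
    (f'' := fun x => -((x + s) ^ 2)⁻¹ + (x ^ 2)⁻¹) (convex_Ioi 0)
  · apply ContinuousOn.sub
    · exact ContinuousOn.log ((continuous_id.add continuous_const).continuousOn)
        (fun x hx => by have : (0:ℝ) < x := hx; positivity)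
    · exact Real.continuousOn_log.mono (fun x hx => ne_of_gt hx)
  · rw [interior_Ioi]
    intro x hx
    have hx' : (0:ℝ) < x := hx
    have h1 : HasDerivAt (fun x : ℝ => Real.log (x + s)) ((x + s)⁻¹) x := by
      have := (Real.hasDerivAt_log (by positivity : x + s ≠ 0)).comp x
        ((hasDerivAt_id x).add_const s)
      simpa [Function.comp_def] using this
    exact ((h1.sub (Real.hasDerivAt_log hx'.ne')).hasDerivWithinAt)
  · rw [interior_Ioi]
    intro x hx
    have hx' : (0:ℝ) < x := hx
    have h1 : HasDerivAt (fun x : ℝ => (x + s)⁻¹) (-((x + s) ^ 2)⁻¹) x := by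
      have := ((hasDerivAt_inv (by positivity : x + s ≠ 0)).comp x
        ((hasDerivAt_id x).add_const s))
      simpa [Function.comp_def] using this
    exact ((h1.sub (hasDerivAt_inv hx'.ne')).hasDerivWithinAt).congr_deriv (by ring)
  · rw [interior_Ioi]
    intro x hx
    have hx' : (0:ℝ) < x := hx
    have h1 : x ^ 2 ≤ (x + s) ^ 2 := by nlinarith
    have h2 : ((x + s) ^ 2)⁻¹ ≤ (x ^ 2)⁻¹ := by
      apply inv_anti₀ (by positivity) h1
    linarith

/-- Convexity of `x ↦ (1 + s/x) ^ β` on `(0, ∞)` for `s ≥ 0`, `β ≥ 0`. -/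
lemma base_convexOn (β s : ℝ) (hβ0 : 0 ≤ β) (hs : 0 ≤ s) :
    ConvexOn ℝ (Set.Ioi 0) (fun x : ℝ => (1 + s / x) ^ β) := by
  have key : ∀ w : ℝ, 0 < w →
      (1 + s / w) ^ β = Real.exp (β * (Real.log (w + s) - Real.log w)) := by
    intro w hw
    have h1 : 1 + s / w = (w + s) / w := by field_simp
    rw [h1, Real.rpow_def_of_pos (by positivity),
      Real.log_div (by positivity) hw.ne', mul_comm]
  have hL := logRatio_convexOn s hs
  refine ⟨convex_Ioi 0, fun x hx y hy a b ha hb hab => ?_⟩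
  have hx' : (0:ℝ) < x := hx
  have hy' : (0:ℝ) < y := hy
  have hz : a • x + b • y ∈ Set.Ioi (0:ℝ) := (convex_Ioi 0) hx hy ha hb hab
  have hz' : (0:ℝ) < a • x + b • y := hz
  have hLi := hL.2 hx hy ha hb hab
  simp only [smul_eq_mul] at hLi hz' ⊢
  rw [key _ hz', key _ hx', key _ hy']
  set Lx := Real.log (x + s) - Real.log x
  set Ly := Real.log (y + s) - Real.log y
  set Lz := Real.log ((a * x + b * y) + s) - Real.log (a * x + b * y)
  have h2 : β * Lz ≤ a * (β * Lx) + b * (β * Ly) := by nlinarith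
  calc Real.exp (β * Lz) ≤ Real.exp (a * (β * Lx) + b * (β * Ly)) :=
        Real.exp_le_exp.2 h2
    _ ≤ a * Real.exp (β * Lx) + b * Real.exp (β * Ly) := by
        have := convexOn_exp.2 (Set.mem_univ (β * Lx)) (Set.mem_univ (β * Ly)) ha hb hab
        simpa [Function.comp_def] using this

/-- Integrability of `s ↦ (1 + s*c) ^ β * exp (-s)` on `(0, ∞)`. -/
lemma integ_aux (β c : ℝ) (hβ0 : 0 ≤ β) (hβ1 : β ≤ 1) (hc : 0 ≤ c) :
    IntegrableOn (fun s : ℝ => (1 + s * c) ^ β * Real.exp (-s)) (Set.Ioi 0) := by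
  have h1 : IntegrableOn (fun s : ℝ => Real.exp (-s)) (Set.Ioi 0) := by
    simpa using exp_neg_integrableOn_Ioi 0 (by norm_num : (0:ℝ) < 1)
  have h2 : IntegrableOn (fun s : ℝ => Real.exp (-s) * s) (Set.Ioi 0) := by
    have := Real.GammaIntegral_convergent (by norm_num : (0:ℝ) < 2)
    norm_num at this
    simpa [Real.rpow_one] using this
  have hb : IntegrableOn (fun s : ℝ => (1 + s * c) * Real.exp (-s)) (Set.Ioi 0) := by
    have h3 := h1.add (h2.const_mul c)
    apply IntegrableOn.congr_fun h3 ?_ measurableSet_Ioi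
    intro s _
    simp only [Pi.add_apply]
    ring
  apply Integrable.mono' hb
  · apply ContinuousOn.aestronglyMeasurable ?_ measurableSet_Ioi
    apply ContinuousOn.mul ?_ (Real.continuous_exp.comp continuous_neg).continuousOn
    exact ContinuousOn.rpow_const
      ((continuous_const.add (continuous_id.mul continuous_const)).continuousOn)
      (fun x _ => Or.inr hβ0)
  · rw [ae_restrict_iff' measurableSet_Ioi]
    filter_upwards with s
    intro hs
    have hs' : (0:ℝ) < s := hs
    have hbase : (1:ℝ) ≤ 1 + s * c := by nlinarith
    have h3 : (1 + s * c) ^ β ≤ (1 + s * c) ^ (1:ℝ) :=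
      Real.rpow_le_rpow_of_exponent_le hbase hβ1
    rw [Real.rpow_one] at h3
    have h4 : 0 ≤ (1 + s * c) ^ β := Real.rpow_nonneg (by linarith) β
    rw [norm_mul, Real.norm_eq_abs, Real.norm_eq_abs, abs_of_nonneg h4,
      abs_of_nonneg (Real.exp_pos _).le]
    exact mul_le_mul_of_nonneg_right h3 (Real.exp_pos _).le

lemma integ_aux' (β c : ℝ) (hβ0 : 0 ≤ β) (hβ1 : β ≤ 1) (hc : 0 < c) :
    IntegrableOn (fun s : ℝ => (1 + s / c) ^ β * Real.exp (-s)) (Set.Ioi 0) := by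
  have := integ_aux β c⁻¹ hβ0 hβ1 (by positivity)
  simpa [div_eq_mul_inv] using this

/-- Integral representation of the gamma Mills ratio. -/
lemma gammaMills_repr (α : ℝ) {x : ℝ} (hα : 1 ≤ α) (hx : 0 < x) :
    gammaMills α x = ∫ s in Set.Ioi (0:ℝ), (1 + s / x) ^ (α - 1) * Real.exp (-s) := by
  have hβ0 : (0:ℝ) ≤ α - 1 := by linarith
  have hshift : (∫ t in Set.Ioi x, t ^ (α - 1) * Real.exp (-t))
      = ∫ s in Set.Ioi (0:ℝ), (s + x) ^ (α - 1) * Real.exp (-(s + x)) := by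
    have h := (measurePreserving_add_right (volume : Measure ℝ) x).setIntegral_preimage_emb
      (MeasurableEquiv.addRight x).measurableEmbedding
      (fun t => t ^ (α - 1) * Real.exp (-t)) (Set.Ioi x)
    rw [← h]
    have hpre : (fun s : ℝ => s + x) ⁻¹' Set.Ioi x = Set.Ioi 0 := by
      rw [preimage_add_const_Ioi, sub_self]
    rw [show ((· + x) ⁻¹' Set.Ioi x) = Set.Ioi (0:ℝ) from hpre]
  unfold gammaMills
  rw [hshift, ← MeasureTheory.integral_div]
  apply setIntegral_congr_fun measurableSet_Ioi
  intro s hs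
  dsimp only
  have hs' : (0:ℝ) < s := hs
  have e1 : (s + x) ^ (α - 1) = (1 + s / x) ^ (α - 1) * x ^ (α - 1) := by
    rw [← Real.mul_rpow (by positivity) hx.le]
    congr 1
    field_simp
    ring
  have e2 : Real.exp (-(s + x)) = Real.exp (-s) * Real.exp (-x) := by
    rw [neg_add, Real.exp_add]
  rw [e1, e2]
  have hx1 : (x:ℝ) ^ (α - 1) ≠ 0 := by positivity
  have hx2 : Real.exp (-x) ≠ 0 := (Real.exp_pos _).ne'
  field_simp


/-- For `1 ≤ α ≤ 2`, the Mills ratio `m(·; α)` of the gamma distribution is reciprocally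
concave on `(0,∞)`: `m(·; α)` is convex on `(0,∞)` and `x ↦ m(1/x; α)` is concave on
`(0,∞)`. -/
theorem gammaMills_reciprocally_concave (α : ℝ) (hα₁ : 1 ≤ α) (hα₂ : α ≤ 2) :
    ConvexOn ℝ (Set.Ioi 0) (gammaMills α) ∧
      ConcaveOn ℝ (Set.Ioi 0) (fun x : ℝ => gammaMills α (1 / x)) := by
  have hβ0 : (0:ℝ) ≤ α - 1 := by linarith
  have hβ1 : α - 1 ≤ 1 := by linarith
  constructor
  · refine ⟨convex_Ioi 0, fun x hx y hy a b ha hb hab => ?_⟩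
    have hx' : (0:ℝ) < x := hx
    have hy' : (0:ℝ) < y := hy
    have hz : a • x + b • y ∈ Set.Ioi (0:ℝ) := (convex_Ioi 0) hx hy ha hb hab
    simp only [smul_eq_mul] at hz ⊢
    have hz' : (0:ℝ) < a * x + b * y := hz
    rw [gammaMills_repr α hα₁ hz', gammaMills_repr α hα₁ hx', gammaMills_repr α hα₁ hy']
    have hix := integ_aux' (α - 1) x hβ0 hβ1 hx'
    have hiy := integ_aux' (α - 1) y hβ0 hβ1 hy'
    have hiz := integ_aux' (α - 1) (a * x + b * y) hβ0 hβ1 hz'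
    have hsum : IntegrableOn
        (fun s : ℝ => a * ((1 + s / x) ^ (α - 1) * Real.exp (-s))
          + b * ((1 + s / y) ^ (α - 1) * Real.exp (-s))) (Set.Ioi 0) :=
      (hix.const_mul a).add (hiy.const_mul b)
    have hmono : (∫ s in Set.Ioi (0:ℝ), (1 + s / (a * x + b * y)) ^ (α - 1) * Real.exp (-s))
        ≤ ∫ s in Set.Ioi (0:ℝ), (a * ((1 + s / x) ^ (α - 1) * Real.exp (-s))
          + b * ((1 + s / y) ^ (α - 1) * Real.exp (-s))) := by
      apply setIntegral_mono_on hiz hsum measurableSet_Ioi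
      intro s hs
      have hs' : (0:ℝ) < s := hs
      have hcvx := (base_convexOn (α - 1) s hβ0 hs'.le).2 hx hy ha hb hab
      simp only [smul_eq_mul] at hcvx
      have hexp : (0:ℝ) ≤ Real.exp (-s) := (Real.exp_pos _).le
      nlinarith [hcvx, Real.exp_pos (-s)]
    calc (∫ s in Set.Ioi (0:ℝ), (1 + s / (a * x + b * y)) ^ (α - 1) * Real.exp (-s))
        ≤ ∫ s in Set.Ioi (0:ℝ), (a * ((1 + s / x) ^ (α - 1) * Real.exp (-s))
          + b * ((1 + s / y) ^ (α - 1) * Real.exp (-s))) := hmono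
      _ = a • (∫ s in Set.Ioi (0:ℝ), (1 + s / x) ^ (α - 1) * Real.exp (-s))
          + b • (∫ s in Set.Ioi (0:ℝ), (1 + s / y) ^ (α - 1) * Real.exp (-s)) := by
        rw [integral_add (hix.const_mul a) (hiy.const_mul b),
          integral_const_mul, integral_const_mul]
        simp [smul_eq_mul]
  · have hrep : ∀ x : ℝ, 0 < x →
        gammaMills α (1 / x) = ∫ s in Set.Ioi (0:ℝ), (1 + s * x) ^ (α - 1) * Real.exp (-s) := by
      intro x hx
      rw [gammaMills_repr α hα₁ (by positivity : (0:ℝ) < 1 / x)]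
      apply setIntegral_congr_fun measurableSet_Ioi
      intro s _
      dsimp only
      congr 2
      rw [one_div, div_eq_mul_inv, inv_inv]
    refine ⟨convex_Ioi 0, fun x hx y hy a b ha hb hab => ?_⟩
    have hx' : (0:ℝ) < x := hx
    have hy' : (0:ℝ) < y := hy
    have hz : a • x + b • y ∈ Set.Ioi (0:ℝ) := (convex_Ioi 0) hx hy ha hb hab
    simp only [smul_eq_mul] at hz ⊢
    have hz' : (0:ℝ) < a * x + b * y := hz
    rw [hrep _ hz', hrep _ hx', hrep _ hy']
    have hix := integ_aux (α - 1) x hβ0 hβ1 hx'.le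
    have hiy := integ_aux (α - 1) y hβ0 hβ1 hy'.le
    have hiz := integ_aux (α - 1) (a * x + b * y) hβ0 hβ1 hz'.le
    have hsum : IntegrableOn
        (fun s : ℝ => a * ((1 + s * x) ^ (α - 1) * Real.exp (-s))
          + b * ((1 + s * y) ^ (α - 1) * Real.exp (-s))) (Set.Ioi 0) :=
      (hix.const_mul a).add (hiy.const_mul b)
    have hmono : (∫ s in Set.Ioi (0:ℝ), (a * ((1 + s * x) ^ (α - 1) * Real.exp (-s))
          + b * ((1 + s * y) ^ (α - 1) * Real.exp (-s))))
        ≤ ∫ s in Set.Ioi (0:ℝ), (1 + s * (a * x + b * y)) ^ (α - 1) * Real.exp (-s) := by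
      apply setIntegral_mono_on hsum hiz measurableSet_Ioi
      intro s hs
      have hs' : (0:ℝ) < s := hs
      have hmx : (1 + s * x) ∈ Set.Ici (0:ℝ) := by
        simp only [Set.mem_Ici]; nlinarith
      have hmy : (1 + s * y) ∈ Set.Ici (0:ℝ) := by
        simp only [Set.mem_Ici]; nlinarith
      have hccv := (Real.concaveOn_rpow hβ0 hβ1).2 hmx hmy ha hb hab
      simp only [smul_eq_mul] at hccv
      have heq : a * (1 + s * x) + b * (1 + s * y) = 1 + s * (a * x + b * y) := by
        nlinarith [hab]
      rw [heq] at hccv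
      nlinarith [hccv, Real.exp_pos (-s)]
    have hsplit : a * (∫ s in Set.Ioi (0:ℝ), (1 + s * x) ^ (α - 1) * Real.exp (-s))
          + b * (∫ s in Set.Ioi (0:ℝ), (1 + s * y) ^ (α - 1) * Real.exp (-s))
        = ∫ s in Set.Ioi (0:ℝ), (a * ((1 + s * x) ^ (α - 1) * Real.exp (-s))
          + b * ((1 + s * y) ^ (α - 1) * Real.exp (-s))) := by
      rw [integral_add (hix.const_mul a) (hiy.const_mul b),
        integral_const_mul, integral_const_mul]
    rw [hsplit]
    exact hmono
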